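/- Let h = (n,n,...,n) be the constant Hessenberg function. Then for the associated graph G_{w,h} (edge j → i iff j < i and w(j) < w(i)), a subset {i_1 < ⋯ < i_j} of [n] is reachable from [j] = {1,...,j} if and only if {w(i_1),...,w(i_j)}↑ ≥ {w(1),...,w(j)}↑ componentwise, where {·}↑ denotes arranging in increasing order. -/

import Mathlib

open Finset Set

variable {α β : Type*} [LinearOrder α] [LinearOrder β]

private lemma reach_iff {n : ℕ} (w : Equiv.Perm (Fin n)) (a b : Fin n) :
    Relation.ReflTransGen (fun x y : Fin n => x < y ∧ w x < w y) a b ↔ a ≤ b ∧ w a ≤ w b := by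
  constructor
  · intro h
    induction h with
    | refl => exact ⟨le_refl _, le_refl _⟩
    | tail _ h ih => exact ⟨ih.1.trans h.1.le, ih.2.trans h.2.le⟩
  · rintro ⟨h1, h2⟩
    rcases eq_or_lt_of_le h1 with rfl | h1
    · exact Relation.ReflTransGen.refl
    · exact Relation.ReflTransGen.single ⟨h1, lt_of_le_of_ne h2 (fun he => absurd (w.injective he) h1.ne)⟩

private lemma bijOn_of_injOn_of_card {S : Finset α} {T : Finset β} {f : α → β}
    (hm : ∀ x ∈ S, f x ∈ T) (hi : Set.InjOn f ↑S) (hc : T.card ≤ S.card) :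
    Set.BijOn f ↑S ↑T := by
  refine ⟨fun x hx => hm x hx, hi, fun y hy => ?_⟩
  obtain ⟨a, ha, rfl⟩ := Finset.surj_on_of_inj_on_of_card_le (fun a _ => f a)
    (fun a ha => hm a ha) (fun a₁ a₂ h₁ h₂ h => hi (Finset.mem_coe.2 h₁) (Finset.mem_coe.2 h₂) h)
    hc y hy
  exact ⟨a, ha, rfl⟩

/-- rank: the number of elements of `S` below the `d`-th element is `d`. -/
private lemma card_filter_lt_orderEmbOfFin (S : Finset α) {k : ℕ} (hS : S.card = k) (d : Fin k) :
    (S.filter (· < S.orderEmbOfFin hS d)).card = d := by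
  classical
  have himg : S.filter (· < S.orderEmbOfFin hS d)
      = (Finset.Iio d).image (S.orderEmbOfFin hS) := by
    ext x
    simp only [Finset.mem_filter, Finset.mem_image, Finset.mem_Iio]
    constructor
    · rintro ⟨hxS, hlt⟩
      have : x ∈ Set.range (S.orderEmbOfFin hS) := by
        rw [Finset.range_orderEmbOfFin]; exact hxS
      obtain ⟨e, rfl⟩ := this
      exact ⟨e, by simpa using hlt, rfl⟩
    · rintro ⟨e, he, rfl⟩
      exact ⟨Finset.orderEmbOfFin_mem S hS e, by simpa using he⟩
  rw [himg, Finset.card_image_of_injective _ (S.orderEmbOfFin hS).injective, Fin.card_Iio]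

/-- If there is a bijection `F : S → T` with `x ≤ F x`, then sorted values dominate. -/
private lemma dom_of_bijOn {S T : Finset α} {k : ℕ} (hS : S.card = k) (hT : T.card = k)
    {F : α → α} (hbij : Set.BijOn F ↑S ↑T) (hle : ∀ x ∈ S, x ≤ F x) (d : Fin k) :
    S.orderEmbOfFin hS d ≤ T.orderEmbOfFin hT d := by
  classical
  by_contra hlt
  push_neg at hlt
  set x := S.orderEmbOfFin hS d with hx
  have hne : Nonempty α := ⟨x⟩
  set G := Function.invFunOn F ↑S with hG
  have hGspec : ∀ t ∈ T, G t ∈ S ∧ F (G t) = t := by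
    intro t ht
    obtain ⟨a, haS, haF⟩ := hbij.surjOn (Finset.mem_coe.2 ht)
    exact ⟨Function.invFunOn_mem ⟨a, haS, haF⟩, Function.invFunOn_eq ⟨a, haS, haF⟩⟩
  have hcard : (T.filter (· < x)).card ≤ (d : ℕ) := by
    rw [← card_filter_lt_orderEmbOfFin S hS d]
    apply Finset.card_le_card_of_injOn G
    · intro t ht
      rw [Finset.mem_coe, Finset.mem_filter] at ht ⊢
      obtain ⟨hGS, hFG⟩ := hGspec t ht.1
      refine ⟨hGS, lt_of_le_of_lt ?_ ht.2⟩
      calc G t ≤ F (G t) := hle _ hGS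
        _ = t := hFG
    · intro t1 h1 t2 h2 he
      rw [Finset.coe_filter] at h1 h2
      have e1 := (hGspec t1 h1.1).2
      have e2 := (hGspec t2 h2.1).2
      rw [← e1, ← e2, he]
  have hsub : (Finset.Iic d).image (T.orderEmbOfFin hT) ⊆ T.filter (· < x) := by
    intro y hy
    obtain ⟨e, he, rfl⟩ := Finset.mem_image.1 hy
    rw [Finset.mem_Iic] at he
    refine Finset.mem_filter.2 ⟨Finset.orderEmbOfFin_mem T hT e, lt_of_le_of_lt ?_ hlt⟩
    exact (T.orderEmbOfFin hT).monotone he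
  have := Finset.card_le_card hsub
  rw [Finset.card_image_of_injective _ (T.orderEmbOfFin hT).injective, Fin.card_Iic] at this
  omega

section swap
variable {γ : Type*} [DecidableEq γ] {R : γ → γ → Prop}

private lemma erase_step (hR : Transitive R) {S T : Finset γ} {F : γ → γ}
    (hbij : Set.BijOn F ↑S ↑T) (hle : ∀ x ∈ S, R x (F x)) {c : γ} (hcS : c ∈ S) (hcT : c ∈ T) :
    ∃ F' : γ → γ, Set.BijOn F' ↑(S.erase c) ↑(T.erase c) ∧ ∀ x ∈ S.erase c, R x (F' x) := by
  obtain ⟨p, hpS, hpF⟩ := hbij.surjOn (Finset.mem_coe.2 hcT)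
  rw [Finset.mem_coe] at hpS
  set q := F c with hq
  refine ⟨fun x => if x = p then q else F x, ⟨?_, ?_, ?_⟩, ?_⟩
  · -- MapsTo
    intro x hx
    rw [Finset.mem_coe, Finset.mem_erase] at hx
    simp only [Finset.mem_coe, Finset.mem_erase]
    show (if x = p then q else F x) ≠ c ∧ (if x = p then q else F x) ∈ T
    by_cases hxp : x = p
    · subst hxp
      rw [if_pos rfl]
      refine ⟨fun hqc => hx.1 ?_, hbij.mapsTo (Finset.mem_coe.2 hcS)⟩
      have hfc : F c = F x := by rw [← hq, hqc, ← hpF]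
      exact (hbij.injOn (Finset.mem_coe.2 hcS) (Finset.mem_coe.2 hpS) hfc).symm
    · rw [if_neg hxp]
      refine ⟨fun hFc => hxp ?_, hbij.mapsTo (Finset.mem_coe.2 hx.2)⟩
      exact hbij.injOn (Finset.mem_coe.2 hx.2) (Finset.mem_coe.2 hpS) (by rw [hFc, hpF])
  · -- InjOn
    intro x hx y hy hxy
    replace hxy : (if x = p then q else F x) = (if y = p then q else F y) := hxy
    rw [Finset.coe_erase, Set.mem_diff, Finset.mem_coe] at hx hy
    by_cases hxp : x = p <;> by_cases hyp : y = p
    · rw [hxp, hyp]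
    · exfalso
      rw [if_pos hxp, if_neg hyp] at hxy
      have : F c = F y := hxy
      have := hbij.injOn (Finset.mem_coe.2 hcS) (Finset.mem_coe.2 hy.1) this
      exact hy.2 (by simp [← this])
    · exfalso
      rw [if_neg hxp, if_pos hyp] at hxy
      have : F x = F c := hxy
      have := hbij.injOn (Finset.mem_coe.2 hx.1) (Finset.mem_coe.2 hcS) this
      exact hx.2 (by simp [this])
    · rw [if_neg hxp, if_neg hyp] at hxy
      exact hbij.injOn (Finset.mem_coe.2 hx.1) (Finset.mem_coe.2 hy.1) hxy
  · -- SurjOn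
    intro t ht
    rw [Finset.mem_coe, Finset.mem_erase] at ht
    obtain ⟨s, hsS, hsF⟩ := hbij.surjOn (Finset.mem_coe.2 ht.2)
    rw [Finset.mem_coe] at hsS
    by_cases hsc : s = c
    · -- t = q; use p
      have hpc : p ≠ c := by
        intro h
        apply ht.1
        calc t = F s := hsF.symm
          _ = F c := by rw [hsc]
          _ = F p := by rw [h]
          _ = c := hpF
      refine ⟨p, ?_, ?_⟩
      · simp [Finset.mem_erase, hpc, hpS]
      · show (if p = p then q else F p) = t
        rw [if_pos rfl, hq, ← hsF, hsc]
    · refine ⟨s, ?_, ?_⟩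
      · simp [Finset.mem_erase, hsc, hsS]
      · have hsp : s ≠ p := by
          intro h; apply ht.1; rw [← hsF, h, hpF]
        show (if s = p then q else F s) = t
        rw [if_neg hsp, hsF]
  · -- condition
    intro x hx
    rw [Finset.mem_erase] at hx
    show R x (if x = p then q else F x)
    by_cases hxp : x = p
    · subst hxp
      rw [if_pos rfl]
      exact hR (hpF ▸ hle x hx.2) (hle c hcS)
    · rw [if_neg hxp]
      exact hle x hx.2

private lemma bij_diff (hR : Transitive R) {S T : Finset γ} {F : γ → γ}
    (hbij : Set.BijOn F ↑S ↑T) (hle : ∀ x ∈ S, R x (F x)) :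
    ∃ G : γ → γ, Set.BijOn G ↑(S \ T) ↑(T \ S) ∧ ∀ x ∈ S \ T, R x (G x) := by
  generalize hk : (S ∩ T).card = k
  induction k generalizing S T F with
  | zero =>
    have hST : S \ T = S := by
      rwa [Finset.sdiff_eq_self_iff_disjoint, Finset.disjoint_iff_inter_eq_empty,
        ← Finset.card_eq_zero]
    have hTS : T \ S = T := by
      rw [Finset.sdiff_eq_self_iff_disjoint, Finset.disjoint_iff_inter_eq_empty,
        ← Finset.card_eq_zero, Finset.inter_comm]
      exact hk
    rw [hST, hTS]
    exact ⟨F, hbij, hle⟩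
  | succ m ih =>
    have hne : (S ∩ T).Nonempty := by rw [← Finset.card_pos, hk]; omega
    obtain ⟨c, hc⟩ := hne
    rw [Finset.mem_inter] at hc
    obtain ⟨F', hbij', hle'⟩ := erase_step hR hbij hle hc.1 hc.2
    have h1 : S.erase c \ T.erase c = S \ T := by
      ext x
      simp only [Finset.mem_sdiff, Finset.mem_erase]
      constructor
      · rintro ⟨⟨hxc, hxS⟩, hnT⟩
        exact ⟨hxS, fun hxT => hnT ⟨hxc, hxT⟩⟩
      · rintro ⟨hxS, hnT⟩
        have hxc : x ≠ c := fun h => hnT (h ▸ hc.2)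
        exact ⟨⟨hxc, hxS⟩, fun h => hnT h.2⟩
    have h2 : T.erase c \ S.erase c = T \ S := by
      ext x
      simp only [Finset.mem_sdiff, Finset.mem_erase]
      constructor
      · rintro ⟨⟨hxc, hxS⟩, hnT⟩
        exact ⟨hxS, fun hxT => hnT ⟨hxc, hxT⟩⟩
      · rintro ⟨hxS, hnT⟩
        have hxc : x ≠ c := fun h => hnT (h ▸ hc.1)
        exact ⟨⟨hxc, hxS⟩, fun h => hnT h.2⟩
    have h3 : (S.erase c ∩ T.erase c).card = m := by
      have : S.erase c ∩ T.erase c = (S ∩ T).erase c := by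
        ext x; simp only [Finset.mem_inter, Finset.mem_erase]; tauto
      rw [this, Finset.card_erase_of_mem (Finset.mem_inter.2 hc), hk]
      omega
    obtain ⟨G, hG1, hG2⟩ := ih hbij' hle' h3
    rw [h1, h2] at hG1
    rw [h1] at hG2
    exact ⟨G, hG1, hG2⟩
end swap

section main
variable {n j : ℕ}

private lemma key_both (w : Equiv.Perm (Fin n)) {B A : Finset (Fin n)}
    (hBmem : ∀ x : Fin n, x ∈ B ↔ (x : ℕ) < j)
    (cardB : B.card = j) (hA : A.card = j)
    (h : ∃ F : Fin n → Fin n, Set.BijOn F ↑B ↑A ∧ ∀ x ∈ B, w x ≤ w (F x)) :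
    ∃ F : Fin n → Fin n, Set.BijOn F ↑B ↑A ∧ ∀ x ∈ B, x ≤ F x ∧ w x ≤ w (F x) := by
  classical
  obtain ⟨F, hbij, hle⟩ := h
  have htrans : Transitive (fun x y : Fin n => w x ≤ w y) := fun a b c h1 h2 => le_trans h1 h2
  obtain ⟨G, hG, hGle⟩ := bij_diff htrans hbij hle
  refine ⟨fun x => if x ∈ A then x else G x, ?_, ?_⟩
  · apply bijOn_of_injOn_of_card
    · intro x hx
      show (if x ∈ A then x else G x) ∈ A
      by_cases hxA : x ∈ A
      · rwa [if_pos hxA]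
      · rw [if_neg hxA]
        have hx' : x ∈ (↑(B \ A) : Set (Fin n)) := Finset.mem_coe.2 (Finset.mem_sdiff.2 ⟨hx, hxA⟩)
        exact (Finset.mem_sdiff.1 (Finset.mem_coe.1 (hG.mapsTo hx'))).1
    · intro x hx y hy hxy
      rw [Finset.mem_coe] at hx hy
      replace hxy : (if x ∈ A then x else G x) = (if y ∈ A then y else G y) := hxy
      by_cases hxA : x ∈ A <;> by_cases hyA : y ∈ A
      · rwa [if_pos hxA, if_pos hyA] at hxy
      · rw [if_pos hxA, if_neg hyA] at hxy
        exfalso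
        have hy' : y ∈ (↑(B \ A) : Set (Fin n)) := Finset.mem_coe.2 (Finset.mem_sdiff.2 ⟨hy, hyA⟩)
        have h2 := Finset.mem_sdiff.1 (Finset.mem_coe.1 (hG.mapsTo hy'))
        rw [← hxy] at h2
        exact h2.2 hx
      · rw [if_neg hxA, if_pos hyA] at hxy
        exfalso
        have hx' : x ∈ (↑(B \ A) : Set (Fin n)) := Finset.mem_coe.2 (Finset.mem_sdiff.2 ⟨hx, hxA⟩)
        have h2 := Finset.mem_sdiff.1 (Finset.mem_coe.1 (hG.mapsTo hx'))
        rw [hxy] at h2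
        exact h2.2 hy
      · rw [if_neg hxA, if_neg hyA] at hxy
        exact hG.injOn (Finset.mem_coe.2 (Finset.mem_sdiff.2 ⟨hx, hxA⟩))
          (Finset.mem_coe.2 (Finset.mem_sdiff.2 ⟨hy, hyA⟩)) hxy
    · rw [hA, cardB]
  · intro x hx
    show x ≤ (if x ∈ A then x else G x) ∧ w x ≤ w (if x ∈ A then x else G x)
    by_cases hxA : x ∈ A
    · rw [if_pos hxA]; exact ⟨le_refl x, le_refl _⟩
    · rw [if_neg hxA]
      have hx' : x ∈ B \ A := Finset.mem_sdiff.2 ⟨hx, hxA⟩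
      refine ⟨?_, hGle x hx'⟩
      have hmem := Finset.mem_sdiff.1 (Finset.mem_coe.1 (hG.mapsTo (Finset.mem_coe.2 hx')))
      have h1 : (x : ℕ) < j := (hBmem x).1 hx
      have h2 : ¬ ((G x : ℕ) < j) := fun hc => hmem.2 ((hBmem (G x)).2 hc)
      exact Fin.le_def.2 (by omega)

private lemma dom_of_exists (w : Equiv.Perm (Fin n)) {B A : Finset (Fin n)}
    (cB : (B.image w).card = j) (cA : (A.image w).card = j)
    (h : ∃ F : Fin n → Fin n, Set.BijOn F ↑B ↑A ∧ ∀ x ∈ B, w x ≤ w (F x)) (d : Fin j) :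
    (B.image w).orderEmbOfFin cB d ≤ (A.image w).orderEmbOfFin cA d := by
  obtain ⟨F, hbij, hle⟩ := h
  have hm : ∀ y ∈ B.image w, w (F (w.symm y)) ∈ A.image w := by
    intro y hy
    obtain ⟨x, hx, rfl⟩ := Finset.mem_image.1 hy
    rw [Equiv.symm_apply_apply]
    exact Finset.mem_image_of_mem w (hbij.mapsTo (Finset.mem_coe.2 hx))
  have hinj : Set.InjOn (fun y => w (F (w.symm y))) ↑(B.image w) := by
    intro y1 h1 y2 h2 he
    rw [Finset.mem_coe] at h1 h2
    obtain ⟨x1, hx1, rfl⟩ := Finset.mem_image.1 h1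
    obtain ⟨x2, hx2, rfl⟩ := Finset.mem_image.1 h2
    replace he : w (F (w.symm (w x1))) = w (F (w.symm (w x2))) := he
    rw [Equiv.symm_apply_apply, Equiv.symm_apply_apply] at he
    have := hbij.injOn (Finset.mem_coe.2 hx1) (Finset.mem_coe.2 hx2) (w.injective he)
    rw [this]
  have hbijH : Set.BijOn (fun y => w (F (w.symm y))) ↑(B.image w) ↑(A.image w) :=
    bijOn_of_injOn_of_card hm hinj (by rw [cA, cB])
  apply dom_of_bijOn cB cA hbijH
  intro y hy
  obtain ⟨x, hx, rfl⟩ := Finset.mem_image.1 hy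
  show w x ≤ w (F (w.symm (w x)))
  rw [Equiv.symm_apply_apply]
  exact hle x hx

private lemma exists_of_dom (w : Equiv.Perm (Fin n)) {B A : Finset (Fin n)}
    (cardB : B.card = j) (hA : A.card = j)
    (cB : (B.image w).card = j) (cA : (A.image w).card = j)
    (h : ∀ d : Fin j, (B.image w).orderEmbOfFin cB d ≤ (A.image w).orderEmbOfFin cA d) :
    ∃ F : Fin n → Fin n, Set.BijOn F ↑B ↑A ∧ ∀ x ∈ B, w x ≤ w (F x) := by
  classical
  set F : Fin n → Fin n := fun x => if hx : x ∈ B then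
      w.symm ((A.image w).orderEmbOfFin cA
        (((B.image w).orderIsoOfFin cB).symm ⟨w x, Finset.mem_image_of_mem w hx⟩)) else x
    with hF
  have hkey : ∀ x (hx : x ∈ B), (B.image w).orderEmbOfFin cB
      (((B.image w).orderIsoOfFin cB).symm ⟨w x, Finset.mem_image_of_mem w hx⟩) = w x := by
    intro x hx
    rw [← Finset.coe_orderIsoOfFin_apply, OrderIso.apply_symm_apply]
  have hval : ∀ x (hx : x ∈ B), w (F x) = (A.image w).orderEmbOfFin cA
      (((B.image w).orderIsoOfFin cB).symm ⟨w x, Finset.mem_image_of_mem w hx⟩) := by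
    intro x hx
    rw [hF]
    simp only [dif_pos hx, Equiv.apply_symm_apply]
  have hmaps : ∀ x ∈ B, F x ∈ A := by
    intro x hx
    have hmem := Finset.orderEmbOfFin_mem (A.image w) cA
      (((B.image w).orderIsoOfFin cB).symm ⟨w x, Finset.mem_image_of_mem w hx⟩)
    obtain ⟨a, ha, hae⟩ := Finset.mem_image.1 hmem
    have : w (F x) = w a := by rw [hval x hx, ← hae]
    rw [w.injective this]
    exact ha
  have hle : ∀ x ∈ B, w x ≤ w (F x) := by
    intro x hx
    rw [hval x hx]
    calc w x = _ := (hkey x hx).symm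
      _ ≤ _ := h _
  refine ⟨F, bijOn_of_injOn_of_card (fun x hx => hmaps x hx) ?_ (by rw [hA, cardB]), hle⟩
  intro x hx y hy he
  rw [Finset.mem_coe] at hx hy
  have h1 : w (F x) = w (F y) := by rw [he]
  rw [hval x hx, hval y hy] at h1
  have h2 := (Finset.orderEmbOfFin (A.image w) cA).injective h1
  have h3 := congrArg ((B.image w).orderIsoOfFin cB) h2
  simp only [OrderIso.apply_symm_apply] at h3
  have h4 : w x = w y := congrArg Subtype.val h3
  exact w.injective h4

end main

private lemma orderEmbOfFin_congr {α : Type*} [LinearOrder α] {s t : Finset α} (hst : s = t)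
    {k : ℕ} (hs : s.card = k) (d : Fin k) :
    s.orderEmbOfFin hs d = t.orderEmbOfFin (hst ▸ hs) d := by subst hst; rfl

theorem stmt7 (n j : ℕ) (hj : j ≤ n) (w : Equiv.Perm (Fin n))
    (A : Finset (Fin n)) (hA : A.card = j) :
    (∃ f : Fin j ≃ {x // x ∈ A},
        ∀ d : Fin j, Relation.ReflTransGen (fun x y : Fin n => x < y ∧ w x < w y)
          (Fin.castLE hj d) ((f d : {x // x ∈ A}) : Fin n))
      ↔ ∀ d : Fin j,
          (((Finset.univ : Finset (Fin j)).image (fun e : Fin j => w (Fin.castLE hj e))).orderIsoOfFin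
              (by rw [Finset.card_image_of_injective _
                    (fun a b hab => Fin.castLE_injective hj (w.injective hab))]
                  simp) d : Fin n)
            ≤ ((A.image (fun x => w x)).orderIsoOfFin
              (by rw [Finset.card_image_of_injective _ w.injective]; exact hA) d : Fin n) := by
  classical
  set B : Finset (Fin n) := Finset.univ.image (Fin.castLE hj) with hBdef
  have hBmem : ∀ x : Fin n, x ∈ B ↔ (x : ℕ) < j := by
    intro x
    rw [hBdef]
    simp only [Finset.mem_image, Finset.mem_univ, true_and]
    constructor
    · rintro ⟨e, rfl⟩; exact e.isLt
    · intro hx; exact ⟨⟨(x : ℕ), hx⟩, rfl⟩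
  have cardB : B.card = j := by
    rw [hBdef, Finset.card_image_of_injective _ (Fin.castLE_injective hj), Finset.card_univ,
      Fintype.card_fin]
  have cB : (B.image w).card = j := by rw [Finset.card_image_of_injective _ w.injective, cardB]
  have cA : (A.image w).card = j := by rw [Finset.card_image_of_injective _ w.injective, hA]
  have hWB : (Finset.univ.image (fun e : Fin j => w (Fin.castLE hj e))) = B.image w := by
    rw [hBdef, Finset.image_image]
    rfl
  have hlhs : (∃ f : Fin j ≃ {x // x ∈ A},
        ∀ d : Fin j, Relation.ReflTransGen (fun x y : Fin n => x < y ∧ w x < w y)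
          (Fin.castLE hj d) ((f d : {x // x ∈ A}) : Fin n))
      ↔ ∃ F : Fin n → Fin n, Set.BijOn F ↑B ↑A ∧ ∀ x ∈ B, x ≤ F x ∧ w x ≤ w (F x) := by
    constructor
    · rintro ⟨f, hf⟩
      refine ⟨fun x => if h : (x : ℕ) < j then ((f ⟨(x : ℕ), h⟩ : {z // z ∈ A}) : Fin n) else x,
        ?_, ?_⟩
      · apply bijOn_of_injOn_of_card
        · intro x hx
          have hxj := (hBmem x).1 hx
          simp only [dif_pos hxj]
          exact (f ⟨(x : ℕ), hxj⟩).2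
        · intro x hx y hy hxy
          rw [Finset.mem_coe] at hx hy
          have hxj := (hBmem x).1 hx
          have hyj := (hBmem y).1 hy
          simp only [dif_pos hxj, dif_pos hyj] at hxy
          have h1 := f.injective (Subtype.coe_injective hxy)
          have hv : (x : ℕ) = (y : ℕ) := Fin.mk.inj_iff.1 h1
          exact Fin.ext hv
        · rw [hA, cardB]
      · intro x hx
        have hxj := (hBmem x).1 hx
        have hr := (reach_iff w _ _).1 (hf ⟨(x : ℕ), hxj⟩)
        have hcast : Fin.castLE hj ⟨(x : ℕ), hxj⟩ = x := rfl
        rw [hcast] at hr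
        simp only [dif_pos hxj]
        exact hr
    · rintro ⟨F, hbij, hcond⟩
      have hmem : ∀ d : Fin j, F (Fin.castLE hj d) ∈ A := by
        intro d
        exact Finset.mem_coe.1
          (hbij.mapsTo (Finset.mem_coe.2 ((hBmem _).2 (by simpa using d.isLt))))
      set g : Fin j → {x // x ∈ A} := fun d => ⟨F (Fin.castLE hj d), hmem d⟩ with hg
      have hginj : Function.Injective g := by
        intro d1 d2 h12
        have h1 : F (Fin.castLE hj d1) = F (Fin.castLE hj d2) := congrArg Subtype.val h12
        have h2 := hbij.injOn (Finset.mem_coe.2 ((hBmem _).2 (by simpa using d1.isLt)))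
          (Finset.mem_coe.2 ((hBmem _).2 (by simpa using d2.isLt))) h1
        exact Fin.castLE_injective hj h2
      have hgsurj : Function.Surjective g := by
        intro a
        obtain ⟨x, hxB, hxF⟩ := hbij.surjOn (Finset.mem_coe.2 a.2)
        rw [Finset.mem_coe] at hxB
        have hxj := (hBmem x).1 hxB
        refine ⟨⟨(x : ℕ), hxj⟩, ?_⟩
        apply Subtype.ext
        show F (Fin.castLE hj ⟨(x : ℕ), hxj⟩) = a
        have hcast : Fin.castLE hj ⟨(x : ℕ), hxj⟩ = x := rfl
        rw [hcast, hxF]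
      refine ⟨Equiv.ofBijective g ⟨hginj, hgsurj⟩, ?_⟩
      intro d
      rw [reach_iff]
      exact hcond _ ((hBmem _).2 (by simpa using d.isLt))
  constructor
  · intro hL d
    rw [Finset.coe_orderIsoOfFin_apply, Finset.coe_orderIsoOfFin_apply,
      orderEmbOfFin_congr hWB]
    obtain ⟨F, h1, h2⟩ := hlhs.1 hL
    exact dom_of_exists w cB cA ⟨F, h1, fun x hx => (h2 x hx).2⟩ d
  · intro hR
    apply hlhs.2
    apply key_both w hBmem cardB hA
    apply exists_of_dom w cardB hA cB cA
    intro d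
    have hd := hR d
    rw [Finset.coe_orderIsoOfFin_apply, Finset.coe_orderIsoOfFin_apply,
      orderEmbOfFin_congr hWB] at hd
    exact hd
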